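/- Let G be a group and H a finite normal subgroup such that G/H is free abelian of rank r, generated by the images of g₁,...,g_r ∈ G. Then there exists a positive integer s such that the subgroup G₁ generated by g₁^s,...,g_r^s is free abelian of rank r (the internal direct product of the cyclic groups ⟨g_i^s⟩) and has finite index in G. -/

import Mathlib

open Subgroup Multiplicative

private theorem pow_mul_comm_aux' {G : Type*} [Group G] {x y c : G}
    (hxy : x * y = c * (y * x)) (hcx : Commute c x) :
    ∀ n : ℕ, x ^ n * y = c ^ n * (y * x ^ n) := by
  intro n
  induction n with
  | zero => simp
  | succ n ih =>
    have hcn : x * c ^ n = c ^ n * x := (hcx.symm.pow_right n).eq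
    calc x ^ (n + 1) * y = x * (x ^ n * y) := by rw [pow_succ']; group
      _ = x * (c ^ n * (y * x ^ n)) := by rw [ih]
      _ = (x * c ^ n) * (y * x ^ n) := by group
      _ = c ^ n * (x * y) * x ^ n := by rw [hcn]; group
      _ = c ^ n * (c * (y * x)) * x ^ n := by rw [hxy]
      _ = c ^ (n + 1) * (y * x ^ (n + 1)) := by rw [pow_succ, pow_succ']; group

private theorem stmt0_aux {G : Type*} [Group G] (H : Subgroup G) [H.Normal] [Finite H]
    (r : ℕ) (g : Fin r → G)
    (e : G ⧸ H ≃* Multiplicative (Fin r → ℤ))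
    (hbasis : ∀ i, e (QuotientGroup.mk (g i)) = Multiplicative.ofAdd (Pi.single i 1))
    (s : ℕ) (hs : 0 < s) (hcomm : ∀ i j, Commute (g i ^ s) (g j ^ s)) :
    (Subgroup.closure (Set.range fun i => g i ^ s)).FiniteIndex ∧
      Nonempty ((Subgroup.closure (Set.range fun i => g i ^ s)) ≃*
        Multiplicative (Fin r → ℤ)) := by
  set x : Fin r → G := fun i => g i ^ s with hxdef
  set π : G →* Multiplicative (Fin r → ℤ) :=
    e.toMonoidHom.comp (QuotientGroup.mk' H) with hπdef
  have hπg : ∀ i, π (g i) = ofAdd (Pi.single i 1) := fun i => hbasis i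
  have hπx : ∀ i, π (x i) = ofAdd (Pi.single i (s : ℤ)) := by
    intro i
    have : π (x i) = (π (g i)) ^ s := map_pow π _ _
    rw [this, hπg, ← ofAdd_nsmul]
    congr 1
    funext j
    by_cases h : j = i <;> simp [Pi.single_apply, h]
  have hpair : Pairwise fun i j => ∀ (a b : Multiplicative ℤ),
      Commute (zpowersHom G (x i) a) (zpowersHom G (x j) b) := by
    intro i j _ a b
    exact (hcomm i j).zpow_zpow _ _
  set φ : (∀ _ : Fin r, Multiplicative ℤ) →* G :=
    MonoidHom.noncommPiCoprod (fun i => zpowersHom G (x i)) hpair with hφdef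
  set ψ : Multiplicative (Fin r → ℤ) →* G :=
    φ.comp (MulEquiv.piMultiplicative fun _ : Fin r => ℤ).toMonoidHom with hψdef
  have hψval : ∀ a : Fin r → ℤ, π (ψ (ofAdd a)) = ofAdd (fun i => (s : ℤ) * a i) := by
    intro a
    have h1 : ψ (ofAdd a) = Finset.univ.noncommProd (fun i => zpowersHom G (x i) (ofAdd (a i)))
        (fun _ _ _ _ h => hpair h _ _) := rfl
    rw [h1]; erw [Finset.map_noncommProd _ _ _ π]; rw [Finset.noncommProd_eq_prod]
    have h2 : ∀ i, π (zpowersHom G (x i) (ofAdd (a i))) = ofAdd (Pi.single i ((a i) * s)) := by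
      intro i
      have : zpowersHom G (x i) (ofAdd (a i)) = (x i) ^ (a i) := rfl
      rw [this, map_zpow, hπx, ← ofAdd_zsmul]
      congr 1
      funext j
      by_cases h : j = i <;> simp [Pi.single_apply, h]
    simp_rw [h2]
    rw [← ofAdd_sum]
    congr 1
    rw [Finset.univ_sum_single (fun i => a i * (s : ℤ))]
    funext j
    exact mul_comm (a j) (s : ℤ)
  -- injectivity of ψ
  have hinj : Function.Injective ψ := by
    rw [injective_iff_map_eq_one]
    intro a ha
    have h1 : π (ψ (ofAdd (toAdd a))) = 1 := by rw [ofAdd_toAdd, ha, map_one]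
    rw [hψval] at h1
    have h2 : (fun i => (s : ℤ) * (toAdd a) i) = 0 := by
      have := congrArg toAdd h1
      simpa using this
    have h3 : toAdd a = 0 := by
      funext i
      have := congrFun h2 i
      simp only [Pi.zero_apply, mul_eq_zero] at this
      rcases this with h | h
      · exact absurd (by exact_mod_cast h) hs.ne'
      · exact h
    have := congrArg ofAdd h3
    simpa using this
  -- range of ψ
  have hrange : ψ.range = Subgroup.closure (Set.range x) := by
    have h1 : ψ.range = φ.range := by
      ext γ
      constructor
      · rintro ⟨a, rfl⟩; exact ⟨_, rfl⟩
      · rintro ⟨b, rfl⟩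
        exact ⟨(MulEquiv.piMultiplicative fun _ : Fin r => ℤ).symm b, by
          simp only [hψdef, MonoidHom.comp_apply, MulEquiv.coe_toMonoidHom,
            MulEquiv.apply_symm_apply]⟩
    rw [h1, MonoidHom.noncommPiCoprod_range]
    have h2 : Subgroup.closure (Set.range x) = ⨆ i, Subgroup.zpowers (x i) := by
      rw [Set.range_eq_iUnion, Subgroup.closure_iUnion]
      simp [Subgroup.zpowers_eq_closure]
    rw [h2]
    simp [Subgroup.range_zpowersHom]
  -- kernel of π
  have hπker : π.ker = H := by
    ext γ
    simp [hπdef, MonoidHom.mem_ker, QuotientGroup.eq_one_iff]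
  constructor
  · -- finite index
    haveI : NeZero s := ⟨hs.ne'⟩
    set q : (Fin r → ℤ) →+ (Fin r → ZMod s) :=
      AddMonoidHom.mk' (fun a i => ((a i : ℤ) : ZMod s)) (by
        intro a b; funext i; simp [Int.cast_add]) with hq
    set ρ : G →* Multiplicative (Fin r → ZMod s) :=
      (AddMonoidHom.toMultiplicative q).comp π with hρ
    haveI : Finite (Multiplicative (Fin r → ZMod s)) :=
      Finite.of_equiv _ (ofAdd : (Fin r → ZMod s) ≃ _)
    haveI : ρ.ker.FiniteIndex := Subgroup.finiteIndex_ker ρ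
    have hHker : H ≤ ρ.ker := by
      intro γ hγ
      have hπγ : π γ = 1 := by rw [← MonoidHom.mem_ker, hπker]; exact hγ
      simp [MonoidHom.mem_ker, hρ, hπγ]
    have hG₁ker : Subgroup.closure (Set.range x) ≤ ρ.ker := by
      rw [Subgroup.closure_le]
      rintro _ ⟨i, rfl⟩
      show ρ (x i) = 1
      rw [hρ, MonoidHom.comp_apply, hπx]
      have : q (Pi.single i (s : ℤ)) = 0 := by
        funext j
        by_cases h : j = i <;> simp [hq, Pi.single_apply, h]
      show ofAdd (q (Pi.single i (s : ℤ))) = 1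
      rw [this]; rfl
    have hKsub : ∀ k ∈ ρ.ker, ∃ h ∈ H, h⁻¹ * k ∈ Subgroup.closure (Set.range x) := by
      intro k hk
      have h1 : q (toAdd (π k)) = 0 := by
        have hk1 : ρ k = 1 := hk
        rw [hρ, MonoidHom.comp_apply] at hk1
        have := congrArg toAdd hk1
        simpa using this
      have h2 : ∀ j, (s : ℤ) ∣ toAdd (π k) j := by
        intro j
        have := congrFun h1 j
        exact (ZMod.intCast_zmod_eq_zero_iff_dvd _ _).mp this
      set a : Fin r → ℤ := fun j => toAdd (π k) j / s with ha
      have h3 : ∀ j, (s : ℤ) * a j = toAdd (π k) j := fun j => Int.mul_ediv_cancel' (h2 j)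
      have h4 : π (ψ (ofAdd a)) = π k := by
        rw [hψval, show (fun i => (s : ℤ) * a i) = toAdd (π k) from funext h3, ofAdd_toAdd]
      refine ⟨k * (ψ (ofAdd a))⁻¹, ?_, ?_⟩
      · rw [← hπker, MonoidHom.mem_ker, map_mul, map_inv, h4, mul_inv_cancel]
      · have h5 : (k * (ψ (ofAdd a))⁻¹)⁻¹ * k = ψ (ofAdd a) := by group
        rw [h5, ← hrange]
        exact ⟨_, rfl⟩
    have hfin : Finite (↥ρ.ker ⧸ ((Subgroup.closure (Set.range x)).subgroupOf ρ.ker)) := by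
      refine Finite.of_surjective
        (fun h : H => (QuotientGroup.mk ⟨(h : G), hHker h.2⟩ :
          ↥ρ.ker ⧸ ((Subgroup.closure (Set.range x)).subgroupOf ρ.ker))) ?_
      intro z
      refine QuotientGroup.induction_on z ?_
      rintro ⟨k, hk⟩
      obtain ⟨h, hh, hmem⟩ := hKsub k hk
      refine ⟨⟨h, hh⟩, ?_⟩
      rw [QuotientGroup.eq, Subgroup.mem_subgroupOf]
      simpa using hmem
    have hne : (Subgroup.closure (Set.range x)).relIndex ρ.ker ≠ 0 := by
      have hnonempty :
          Nonempty (↥ρ.ker ⧸ ((Subgroup.closure (Set.range x)).subgroupOf ρ.ker)) :=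
        ⟨QuotientGroup.mk 1⟩
      exact Nat.card_ne_zero.mpr ⟨hnonempty, hfin⟩
    constructor
    rw [← Subgroup.relIndex_mul_index hG₁ker]
    exact Nat.mul_ne_zero hne Subgroup.FiniteIndex.index_ne_zero
  · -- the isomorphism
    exact ⟨(MulEquiv.subgroupCongr hrange.symm).trans (MonoidHom.ofInjective hinj).symm⟩

/-- Lemma 2.4(1): if `H ◁ G` is finite and `G/H` is free abelian of rank `r`
with free basis the images of `g₁, …, g_r`, then for some `s > 0` the subgroup
generated by the `gᵢ^s` is free abelian of rank `r` (the `gᵢ^s` pairwise commute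
and the induced map from `ℤ^r` is an isomorphism onto it) and has finite index in `G`. -/
theorem stmt0 {G : Type*} [Group G] (H : Subgroup G) [H.Normal] [Finite H]
    (r : ℕ) (g : Fin r → G)
    (e : G ⧸ H ≃* Multiplicative (Fin r → ℤ))
    (hbasis : ∀ i, e (QuotientGroup.mk (g i)) = Multiplicative.ofAdd (Pi.single i 1)) :
    ∃ s : ℕ, 0 < s ∧
      (∀ i j, Commute (g i ^ s) (g j ^ s)) ∧
      (Subgroup.closure (Set.range fun i => g i ^ s)).FiniteIndex ∧
      Nonempty ((Subgroup.closure (Set.range fun i => g i ^ s)) ≃*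
        Multiplicative (Fin r → ℤ)) := by
  haveI : Finite (MulAut H) :=
    Finite.of_injective (fun f => (f : H → H)) DFunLike.coe_injective
  set N := (MulAut.conjNormal (H := H) : G →* MulAut H).ker with hN
  haveI : Finite (MulAut.conjNormal (H := H) : G →* MulAut H).range := Subtype.finite
  haveI hNfi : N.FiniteIndex := Subgroup.finiteIndex_ker _
  set m := N.index with hm'
  have hm : 0 < m := Nat.pos_of_ne_zero hNfi.index_ne_zero
  have hmem : ∀ γ : G, γ ^ m ∈ N := fun γ => Subgroup.pow_index_mem N γ
  have hcent : ∀ n ∈ N, ∀ c ∈ H, n * c = c * n := by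
    intro n hn c hc
    have h1 : (MulAut.conjNormal (H := H) n) ⟨c, hc⟩ = ⟨c, hc⟩ := by
      have : MulAut.conjNormal (H := H) n = 1 := hn
      rw [this]; rfl
    have h2 : n * c * n⁻¹ = c := by
      have := congrArg Subtype.val h1
      rwa [MulAut.conjNormal_apply] at this
    exact mul_inv_eq_iff_eq_mul.mp h2
  set t := Nat.card H with ht'
  have ht : 0 < t := Nat.card_pos
  have hct : ∀ c ∈ H, c ^ t = 1 := by
    intro c hc
    have h1 : (⟨c, hc⟩ : H) ^ t = 1 := pow_card_eq_one'
    have := congrArg Subtype.val h1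
    simpa using this
  have hcommH : ∀ a b : G, a * b * a⁻¹ * b⁻¹ ∈ H := by
    intro a b
    rw [← QuotientGroup.eq_one_iff]
    apply e.injective
    simp only [QuotientGroup.mk_mul, QuotientGroup.mk_inv, map_mul, map_inv, map_one]
    rw [mul_comm (e ((QuotientGroup.mk a))) (e ((QuotientGroup.mk b)))]
    group
  have hcomm : ∀ i j, Commute (g i ^ (m * t)) (g j ^ (m * t)) := by
    intro i j
    set X := g i ^ m with hX
    set Y := g j ^ m with hY
    have hx : X ∈ N := hmem _
    have hcH : X * Y * X⁻¹ * Y⁻¹ ∈ H := hcommH _ _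
    have hXY : X * Y = (X * Y * X⁻¹ * Y⁻¹) * (Y * X) := by group
    have hcX : Commute (X * Y * X⁻¹ * Y⁻¹) X := (hcent X hx _ hcH).symm
    have key : X ^ t * Y = Y * X ^ t := by
      have h2 := pow_mul_comm_aux' hXY hcX t
      rwa [hct _ hcH, one_mul] at h2
    have h3 : Commute (X ^ t) Y := key
    have h4 : Commute (X ^ t) (Y ^ t) := h3.pow_right t
    rw [pow_mul, pow_mul]
    exact h4
  obtain ⟨h1, h2⟩ := stmt0_aux H r g e hbasis (m * t) (Nat.mul_pos hm ht) hcomm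
  exact ⟨m * t, Nat.mul_pos hm ht, hcomm, h1, h2⟩
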